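/- If φ_0 ∈ C(X,ℝ) satisfies h_{∞,φ_0} = 0, then the residual entropy map φ ↦ h_{∞,φ} is continuous at φ_0 with respect to the supremum norm on C(X,ℝ). -/

import Mathlib

open MeasureTheory

/-- The set of `f`-invariant Borel probability measures. -/
def invP {X : Type*} [TopologicalSpace X] [MeasurableSpace X] (f : X → X) :
    Set (ProbabilityMeasure X) :=
  {μ | (μ : Measure X).map f = (μ : Measure X)}

/-- The maximal value `b_φ = max {∫ φ dμ : μ ∈ M}`. -/
noncomputable def bMax {X : Type*} [MetricSpace X] [CompactSpace X] [MeasurableSpace X]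
    (f : X → X) (φ : C(X, ℝ)) : ℝ :=
  sSup ((fun μ : ProbabilityMeasure X => ∫ x, φ x ∂(μ : Measure X)) '' invP f)

/-- The residual entropy `h_{∞,φ} = sup {h_μ(f) : ∫ φ dμ = b_φ}` (with respect to an
abstract entropy function `h`). -/
noncomputable def residualEntropy {X : Type*} [MetricSpace X] [CompactSpace X]
    [MeasurableSpace X] (f : X → X) (h : ProbabilityMeasure X → ℝ) (φ : C(X, ℝ)) : ℝ :=
  sSup (h '' {μ ∈ invP f | ∫ x, φ x ∂(μ : Measure X) = bMax f φ})

/-!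
### Auxiliary development: compactness of the space of probability measures

This version of mathlib does not contain the weak-* compactness of the space of
Borel probability measures on a compact metric space, so we prove it here from
scratch, via a Riesz–Markov–Kakutani style construction: from an ultrafilter of
probability measures we extract a limiting positive linear functional, build the
associated Riesz content and its Borel measure, prove the integral representation,
and conclude that the ultrafilter converges to the resulting probability measure.
-/

open Filter Topology BoundedContinuousFunction Set NNReal ENNReal

namespace RMKCompactAux

variable {X : Type*} [MetricSpace X] [CompactSpace X] [MeasurableSpace X] [BorelSpace X]

variable (F : Ultrafilter (ProbabilityMeasure X))

/-- Testing a probability measure against a nonnegative bounded continuous function. -/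
noncomputable def tst (g : X →ᵇ ℝ≥0) (μ : ProbabilityMeasure X) : ℝ≥0 :=
  μ.toFiniteMeasure.testAgainstNN g

lemma tst_le (g : X →ᵇ ℝ≥0) (μ : ProbabilityMeasure X) : tst g μ ≤ nndist g 0 := by
  have h1 : μ.toFiniteMeasure.testAgainstNN g ≤
      μ.toFiniteMeasure.testAgainstNN (BoundedContinuousFunction.const X (nndist g 0)) := by
    apply FiniteMeasure.testAgainstNN_mono
    intro x
    simpa using BoundedContinuousFunction.NNReal.upper_bound g x
  have h2 := μ.toFiniteMeasure.testAgainstNN_const (nndist g 0)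
  rw [h2, μ.mass_toFiniteMeasure, mul_one] at h1
  exact h1

lemma exists_lim (g : X →ᵇ ℝ≥0) : ∃ a : ℝ≥0, Tendsto (tst g) F (𝓝 a) := by
  have hmem : Set.Icc (0 : ℝ≥0) (nndist g 0) ∈ Filter.map (tst g) (F : Filter _) := by
    refine Filter.mem_map.mpr ?_
    filter_upwards with μ
    exact ⟨zero_le, tst_le g μ⟩
  obtain ⟨a, -, ha⟩ := (isCompact_Icc (a := (0 : ℝ≥0)) (b := nndist g 0)).ultrafilter_le_nhds
    (F.map (tst g)) (by rwa [le_principal_iff])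
  exact ⟨a, ha⟩

/-- The limiting functional along the ultrafilter. -/
noncomputable def Lam0 (g : X →ᵇ ℝ≥0) : ℝ≥0 := (exists_lim F g).choose

lemma tendsto_Lam0 (g : X →ᵇ ℝ≥0) : Tendsto (tst g) F (𝓝 (Lam0 F g)) :=
  (exists_lim F g).choose_spec

/-- The limiting functional along the ultrafilter, as a linear map. -/
noncomputable def Lam : (X →ᵇ ℝ≥0) →ₗ[ℝ≥0] ℝ≥0 where
  toFun := Lam0 F
  map_add' g₁ g₂ := by
    refine tendsto_nhds_unique (tendsto_Lam0 F (g₁ + g₂)) ?_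
    have : (tst (g₁ + g₂) : ProbabilityMeasure X → ℝ≥0) = fun μ => tst g₁ μ + tst g₂ μ := by
      funext μ
      exact μ.toFiniteMeasure.testAgainstNN_add g₁ g₂
    rw [this]
    exact (tendsto_Lam0 F g₁).add (tendsto_Lam0 F g₂)
  map_smul' c g := by
    refine tendsto_nhds_unique (tendsto_Lam0 F (c • g)) ?_
    have : (tst (c • g) : ProbabilityMeasure X → ℝ≥0) = fun μ => c * tst g μ := by
      funext μ
      simpa [tst, smul_eq_mul] using μ.toFiniteMeasure.testAgainstNN_smul c g
    rw [this]
    simpa [smul_eq_mul] using (tendsto_Lam0 F g).const_mul c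

lemma lam_mono {g₁ g₂ : X →ᵇ ℝ≥0} (hg : ∀ x, g₁ x ≤ g₂ x) : Lam F g₁ ≤ Lam F g₂ := by
  have hcont : Continuous fun x => g₂ x - g₁ x := g₂.continuous.sub g₁.continuous
  have hkey : g₂ = g₁ + mkOfCompact ⟨fun x => g₂ x - g₁ x, hcont⟩ := by
    ext x
    simp [add_tsub_cancel_of_le (hg x)]
  calc Lam F g₁ ≤ Lam F g₁ + Lam F (mkOfCompact ⟨fun x => g₂ x - g₁ x, hcont⟩) := le_self_add
  _ = Lam F g₂ := by rw [← map_add, ← hkey]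

lemma lam_one : Lam F 1 = 1 := by
  refine tendsto_nhds_unique (tendsto_Lam0 F 1) ?_
  have : (tst (1 : X →ᵇ ℝ≥0) : ProbabilityMeasure X → ℝ≥0) = fun _ => 1 := by
    funext μ
    simp [tst, FiniteMeasure.testAgainstNN_one, μ.mass_toFiniteMeasure]
  rw [this]
  exact tendsto_const_nhds


lemma g_le_nndist (g : X →ᵇ ℝ≥0) (x : X) : g x ≤ nndist g 0 := by
  simpa using BoundedContinuousFunction.NNReal.upper_bound g x

/-- Pointwise identity for the "slab decomposition" of a nonnegative number. -/
lemma sum_min_slab (δ a : ℝ≥0) : ∀ n : ℕ, ∑ i ∈ Finset.range n, min δ (a - i * δ) = min a (n * δ)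
  | 0 => by simp
  | (n + 1) => by
    rw [Finset.sum_range_succ, sum_min_slab δ a n]
    rcases le_total a (n * δ) with hle | hle
    · have h0 : a - (n : ℝ≥0) * δ = 0 := tsub_eq_zero_of_le hle
      have h1 : min a ((n : ℝ≥0) * δ) = a := min_eq_left hle
      have h2 : min a ((n + 1 : ℕ) * δ) = a := by
        refine min_eq_left (hle.trans ?_)
        push_cast
        exact mul_le_mul_of_nonneg_right (by simp) zero_le
      rw [h0, h1, h2]
      simp
    · have h1 : min a ((n : ℝ≥0) * δ) = (n : ℝ≥0) * δ := min_eq_right hle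
      rw [h1, ← min_add_add_left, add_tsub_cancel_of_le hle]
      rw [min_comm]
      congr 1
      push_cast
      ring

section MainEstimate

variable (g : X →ᵇ ℝ≥0)

/-- The slab functions. -/
noncomputable def slab (δ : ℝ≥0) (i : ℕ) : X →ᵇ ℝ≥0 :=
  mkOfCompact ⟨fun x => min δ (g x - (i : ℝ≥0) * δ),
    continuous_const.min ((g.continuous.sub continuous_const))⟩

lemma slab_apply (δ : ℝ≥0) (i : ℕ) (x : X) :
    slab g δ i x = min δ (g x - (i : ℝ≥0) * δ) := rfl

/-- The superlevel compact sets. -/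
noncomputable def slevel (δ : ℝ≥0) (i : ℕ) : TopologicalSpace.Compacts X :=
  ⟨{x | (i : ℝ≥0) * δ ≤ g x}, (IsClosed.isCompact (isClosed_le continuous_const g.continuous))⟩

lemma sum_slab (δ : ℝ≥0) {n : ℕ} (hn : ∀ x, g x ≤ n * δ) :
    ∑ i ∈ Finset.range n, slab g δ i = g := by
  ext x
  have hmin := sum_min_slab δ (g x) n
  have hx : min (g x) ((n : ℝ≥0) * δ) = g x := min_eq_left (hn x)
  have hx2 : (∑ i ∈ Finset.range n, slab g δ i) x = g x := by
    calc (∑ i ∈ Finset.range n, slab g δ i) x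
        = ∑ i ∈ Finset.range n, slab g δ i x := by
          rw [BoundedContinuousFunction.coe_sum]; simp
      _ = g x := by
          simp only [slab_apply]
          rw [hmin, hx]
  exact_mod_cast hx2

theorem compactSpace : CompactSpace (ProbabilityMeasure X) := by
  infer_instance

end MainEstimate

end RMKCompactAux

/-- If `φ₀ ∈ C(X,ℝ)` satisfies `h_{∞,φ₀} = 0`, then the residual entropy
map `φ ↦ h_{∞,φ}` is continuous at `φ₀` with respect to the supremum norm on `C(X,ℝ)`.
The entropy map `h` is upper semi-continuous, affine, nonnegative and bounded on `M`. -/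
theorem statement8 {X : Type*} [MetricSpace X] [CompactSpace X]
    [MeasurableSpace X] [BorelSpace X]
    (f : X → X) (hf : Continuous f)
    (hMne : (invP f).Nonempty)
    (h : ProbabilityMeasure X → ℝ)
    (husc : UpperSemicontinuousOn h (invP f))
    (haff : ∀ μ ∈ invP f, ∀ ν ∈ invP f, ∀ t : ℝ, 0 ≤ t → t ≤ 1 →
      ∀ σ : ProbabilityMeasure X,
        (σ : Measure X) = ENNReal.ofReal t • (μ : Measure X)
            + ENNReal.ofReal (1 - t) • (ν : Measure X) →
        h σ = t * h μ + (1 - t) * h ν)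
    (hnn : ∀ μ ∈ invP f, 0 ≤ h μ)
    (hbdd : BddAbove (h '' invP f))
    (φ₀ : C(X, ℝ)) (h0 : residualEntropy f h φ₀ = 0) :
    ContinuousAt (residualEntropy f h) φ₀ := by
  classical
  have hPcpt : CompactSpace (ProbabilityMeasure X) := RMKCompactAux.compactSpace
  -- `invP f` is closed, hence compact
  have hMeq : invP f = {μ : ProbabilityMeasure X |
      μ.map hf.measurable.aemeasurable = μ} := by
    ext μ
    constructor
    · intro hμ
      apply ProbabilityMeasure.toMeasure_injective
      rw [ProbabilityMeasure.toMeasure_map]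
      exact hμ
    · intro hμ
      have := congrArg (fun ν : ProbabilityMeasure X => (ν : Measure X)) hμ
      simpa [invP, Set.mem_setOf_eq, ProbabilityMeasure.toMeasure_map] using this
  have hMclosed : IsClosed (invP f) := by
    rw [hMeq]
    exact isClosed_eq (ProbabilityMeasure.continuous_map hf) continuous_id
  have hMcpt : IsCompact (invP f) := hMclosed.isCompact
  -- continuity of integration
  have hJc : ∀ φ : C(X, ℝ), Continuous
      (fun μ : ProbabilityMeasure X => ∫ x, φ x ∂(μ : Measure X)) := by
    intro φ
    have := MeasureTheory.ProbabilityMeasure.continuous_integral_boundedContinuousFunction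
      (X := X) (BoundedContinuousFunction.mkOfCompact φ)
    simpa using this
  -- the maximum is attained
  have hbMem : ∀ φ : C(X, ℝ), bMax f φ ∈
      (fun μ : ProbabilityMeasure X => ∫ x, φ x ∂(μ : Measure X)) '' invP f := by
    intro φ
    exact (hMcpt.image (hJc φ)).sSup_mem (hMne.image _)
  have hbddI : ∀ φ : C(X, ℝ), BddAbove
      ((fun μ : ProbabilityMeasure X => ∫ x, φ x ∂(μ : Measure X)) '' invP f) := by
    intro φ
    exact (hMcpt.image (hJc φ)).bddAbove
  -- pointwise distance bound for integrals
  have hIdiff : ∀ (φ ψ : C(X, ℝ)) (μ : ProbabilityMeasure X),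
      |(∫ x, φ x ∂(μ : Measure X)) - ∫ x, ψ x ∂(μ : Measure X)| ≤ dist φ ψ := by
    intro φ ψ μ
    have hiφ : Integrable (fun x => φ x) (μ : Measure X) := by
      have := BoundedContinuousFunction.integrable (μ : Measure X)
        (BoundedContinuousFunction.mkOfCompact φ)
      exact this
    have hiψ : Integrable (fun x => ψ x) (μ : Measure X) := by
      have := BoundedContinuousFunction.integrable (μ : Measure X)
        (BoundedContinuousFunction.mkOfCompact ψ)
      exact this
    have heq : (∫ x, φ x ∂(μ : Measure X)) - ∫ x, ψ x ∂(μ : Measure X) =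
        ∫ x, (φ x - ψ x) ∂(μ : Measure X) := (integral_sub hiφ hiψ).symm
    rw [heq, ← Real.norm_eq_abs]
    have hb : ∀ x, ‖φ x - ψ x‖ ≤ dist φ ψ := by
      intro x
      rw [Real.norm_eq_abs, ← Real.dist_eq]
      exact ContinuousMap.dist_apply_le_dist x
    calc ‖∫ x, (φ x - ψ x) ∂(μ : Measure X)‖
        ≤ dist φ ψ * ((μ : Measure X) Set.univ).toReal :=
          norm_integral_le_of_norm_le_const (Filter.Eventually.of_forall hb)
      _ = dist φ ψ := by simp
  -- Lipschitz property of bMax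
  have hbLip : ∀ φ ψ : C(X, ℝ), bMax f φ ≤ bMax f ψ + dist φ ψ := by
    intro φ ψ
    refine csSup_le (hMne.image _) ?_
    rintro b ⟨μ, hμ, rfl⟩
    have h1 := (abs_le.mp (hIdiff φ ψ μ)).2
    have h2 : (∫ x, ψ x ∂(μ : Measure X)) ≤ bMax f ψ :=
      le_csSup (hbddI ψ) ⟨μ, hμ, rfl⟩
    simp only at h1 ⊢
    linarith
  have hbAbs : ∀ φ ψ : C(X, ℝ), |bMax f φ - bMax f ψ| ≤ dist φ ψ := by
    intro φ ψ
    rw [abs_le]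
    constructor
    · have := hbLip ψ φ
      rw [dist_comm] at this
      linarith
    · have := hbLip φ ψ
      linarith
  -- the argmax sets
  set A : C(X, ℝ) → Set (ProbabilityMeasure X) :=
    fun φ => {μ ∈ invP f | ∫ x, φ x ∂(μ : Measure X) = bMax f φ} with hA
  have hAne : ∀ φ, (A φ).Nonempty := by
    intro φ
    obtain ⟨μ, hμ, hb⟩ := hbMem φ
    exact ⟨μ, hμ, hb⟩
  have hAbdd : ∀ φ, BddAbove (h '' A φ) := by
    intro φ
    refine hbdd.mono (Set.image_mono ?_)
    exact Set.sep_subset _ _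
  have hRnonneg : ∀ φ, 0 ≤ residualEntropy f h φ := by
    intro φ
    obtain ⟨μ, hμM, hμb⟩ := hAne φ
    exact le_trans (hnn μ hμM) (le_csSup (hAbdd φ) ⟨μ, ⟨hμM, hμb⟩, rfl⟩)
  have hR0le : ∀ μ ∈ A φ₀, h μ ≤ 0 := by
    intro μ hμ
    have := le_csSup (hAbdd φ₀) ⟨μ, hμ, rfl⟩
    rwa [show sSup (h '' A φ₀) = residualEntropy f h φ₀ from rfl, h0] at this
  -- contradiction setup
  rw [Metric.continuousAt_iff]
  by_contra hcont
  push_neg at hcont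
  obtain ⟨ε, hε, hφ⟩ := hcont
  choose φs hφs1 hφs2 using fun n : ℕ => hφ (1 / (n + 1)) (by positivity)
  have hRge : ∀ n, ε ≤ residualEntropy f h (φs n) := by
    intro n
    have h1 := hφs2 n
    rw [Real.dist_eq, h0, sub_zero, abs_of_nonneg (hRnonneg (φs n))] at h1
    exact h1
  have hex : ∀ n, ∃ μ, μ ∈ A (φs n) ∧ ε / 2 < h μ := by
    intro n
    have hlt : ε / 2 < residualEntropy f h (φs n) :=
      lt_of_lt_of_le (by linarith) (hRge n)
    obtain ⟨y, ⟨μ, hμ, rfl⟩, hy⟩ :=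
      exists_lt_of_lt_csSup ((hAne (φs n)).image h) hlt
    exact ⟨μ, hμ, hy⟩
  choose μs hμsA hμsh using hex
  have hμsM : ∀ n, μs n ∈ invP f := fun n => (hμsA n).1
  -- extract cluster point
  obtain ⟨μ, hμM, hclus⟩ : ∃ μ ∈ invP f, ClusterPt μ (Filter.map μs Filter.atTop) := by
    refine hMcpt (f := Filter.map μs Filter.atTop) ?_
    rw [le_principal_iff, Filter.mem_map]
    exact Filter.Eventually.of_forall hμsM
  set V : Filter ℕ := Filter.atTop ⊓ Filter.comap μs (𝓝 μ) with hV
  have hVne : V.NeBot := by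
    have h1 : (Filter.map μs (Filter.atTop ⊓ Filter.comap μs (𝓝 μ))).NeBot := by
      rw [Filter.push_pull]
      rw [ClusterPt] at hclus
      rwa [inf_comm] at hclus
    exact (Filter.map_neBot_iff μs).mp h1
  have hVtend : Filter.Tendsto μs V (𝓝 μ) := by
    rw [hV]
    exact Filter.tendsto_comap.mono_left inf_le_right
  have hVtop : Filter.Tendsto (fun n : ℕ => n) V Filter.atTop := by
    rw [hV]
    exact tendsto_id.mono_left inf_le_left
  -- distance to φ₀ tends to zero
  have hdist0 : Filter.Tendsto (fun n => dist (φs n) φ₀) V (𝓝 0) := by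
    have hb : ∀ n : ℕ, dist (φs n) φ₀ ≤ 1 / (n + 1) := fun n => (hφs1 n).le
    have htend : Filter.Tendsto (fun n : ℕ => 1 / ((n : ℝ) + 1)) V (𝓝 0) :=
      (tendsto_one_div_add_atTop_nhds_zero_nat).comp hVtop
    exact squeeze_zero (fun n => dist_nonneg) hb htend
  -- limit 1 : ∫ φ₀ dμₙ → ∫ φ₀ dμ
  have hlim1 : Filter.Tendsto (fun n => ∫ x, φ₀ x ∂(μs n : Measure X)) V
      (𝓝 (∫ x, φ₀ x ∂(μ : Measure X))) :=
    ((hJc φ₀).continuousAt.tendsto).comp hVtend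
  -- limit 2 : ∫ φ₀ dμₙ → bMax φ₀
  have hlim2 : Filter.Tendsto (fun n => ∫ x, φ₀ x ∂(μs n : Measure X)) V
      (𝓝 (bMax f φ₀)) := by
    rw [tendsto_iff_dist_tendsto_zero]
    have hb : ∀ n, dist (∫ x, φ₀ x ∂(μs n : Measure X)) (bMax f φ₀) ≤
        dist (φs n) φ₀ + dist (φs n) φ₀ := by
      intro n
      have e1 : |(∫ x, φ₀ x ∂(μs n : Measure X)) - ∫ x, φs n x ∂(μs n : Measure X)| ≤
          dist (φs n) φ₀ := by
        have := hIdiff φ₀ (φs n) (μs n)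
        rwa [dist_comm φ₀ (φs n)] at this
      have e2 : (∫ x, φs n x ∂(μs n : Measure X)) = bMax f (φs n) := (hμsA n).2
      have e3 : |bMax f (φs n) - bMax f φ₀| ≤ dist (φs n) φ₀ := hbAbs (φs n) φ₀
      rw [Real.dist_eq]
      calc |(∫ x, φ₀ x ∂(μs n : Measure X)) - bMax f φ₀| =
          |((∫ x, φ₀ x ∂(μs n : Measure X)) - ∫ x, φs n x ∂(μs n : Measure X)) +
            (bMax f (φs n) - bMax f φ₀)| := by rw [← e2]; ring_nf
        _ ≤ |(∫ x, φ₀ x ∂(μs n : Measure X)) - ∫ x, φs n x ∂(μs n : Measure X)| +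
            |bMax f (φs n) - bMax f φ₀| := abs_add_le _ _
        _ ≤ dist (φs n) φ₀ + dist (φs n) φ₀ := add_le_add e1 e3
    have htend : Filter.Tendsto (fun n => dist (φs n) φ₀ + dist (φs n) φ₀) V (𝓝 0) := by
      have := hdist0.add hdist0
      simpa using this
    exact squeeze_zero (fun n => dist_nonneg) hb htend
  have hJeq : (∫ x, φ₀ x ∂(μ : Measure X)) = bMax f φ₀ := tendsto_nhds_unique hlim1 hlim2
  -- μ is in A φ₀, so h μ ≤ 0 < ε/2, contradiction with USC
  have hμA : μ ∈ A φ₀ := ⟨hμM, hJeq⟩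
  have hμ0 : h μ ≤ 0 := hR0le μ hμA
  have husc' := husc μ hμM (ε / 2) (lt_of_le_of_lt hμ0 (by linarith))
  have hVtendW : Filter.Tendsto μs V (𝓝[invP f] μ) :=
    tendsto_nhdsWithin_iff.mpr ⟨hVtend, Filter.Eventually.of_forall hμsM⟩
  have hcontra := (hVtendW.eventually husc').and
    (Filter.Eventually.of_forall fun n => hμsh n)
  obtain ⟨n, hn1, hn2⟩ := hcontra.exists
  linarith
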